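/- For a continuous function f on [0,∞), the composition of the Abel transform with itself satisfies (A(Af))(t) = π·∫_0^t f(s) ds for all t ≥ 0, where Af(t) = ∫_0^t f(s)/√(t-s) ds. -/

import Mathlib

open Real MeasureTheory intervalIntegral


lemma sqrt_inv_eq (x : ℝ) : (Real.sqrt x)⁻¹ = x ^ (-(1/2) : ℝ) := by
  rcases lt_trichotomy x 0 with h | h | h
  · rw [Real.sqrt_eq_zero_of_nonpos h.le, inv_zero, Real.rpow_def_of_neg h]
    rw [show (-(1/2):ℝ)*π = -(π/2) by ring, Real.cos_neg, Real.cos_pi_div_two, mul_zero]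
  · subst h; simp
  · rw [Real.sqrt_eq_rpow, ← Real.rpow_neg h.le]

lemma sqrtInv_intInt (c a b : ℝ) :
    IntervalIntegrable (fun x => (Real.sqrt (c - x))⁻¹) volume a b := by
  have h : IntervalIntegrable (fun x : ℝ => x ^ (-(1/2) : ℝ)) volume (c - b) (c - a) :=
    intervalIntegrable_rpow' (by norm_num)
  simpa [sqrt_inv_eq] using (h.comp_sub_left c).symm

lemma sqrt_integral (s : ℝ) (hs : 0 ≤ s) :
    ∫ x in (0:ℝ)..s, (Real.sqrt (s - x))⁻¹ = 2 * Real.sqrt s := by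
  simp_rw [sqrt_inv_eq]
  rw [intervalIntegral.integral_comp_sub_left (fun x => x ^ (-(1/2):ℝ)) s, sub_zero, sub_self,
    integral_rpow (Or.inl (by norm_num))]
  rw [Real.zero_rpow (by norm_num), Real.sqrt_eq_rpow]
  norm_num
  ring

lemma cpow_neg_half (y : ℝ) (hy : 0 ≤ y) :
    (y : ℂ) ^ (-(1/2) : ℂ) = ((Real.sqrt y : ℝ) : ℂ)⁻¹ := by
  rcases hy.eq_or_lt with h | h
  · subst h; rw [Complex.ofReal_zero, Complex.zero_cpow (by norm_num)]; simp
  · rw [show (-(1/2) : ℂ) = ((-(1/2) : ℝ) : ℂ) by norm_num, ← Complex.ofReal_cpow hy,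
      ← sqrt_inv_eq, Complex.ofReal_inv]

lemma beta_half : Complex.betaIntegral (1/2) (1/2) = (π : ℂ) := by
  have h := Complex.Gamma_mul_Gamma_eq_betaIntegral (s := 1/2) (t := 1/2)
    (by norm_num) (by norm_num)
  rw [Complex.Gamma_one_half_eq] at h
  norm_num [Complex.Gamma_one] at h
  rw [← h, ← Complex.cpow_add _ _ (by norm_cast; exact Real.pi_ne_zero)]
  norm_num

lemma kernel_integral {u t : ℝ} (h : u < t) :
    ∫ s in u..t, (((Real.sqrt (s - u) : ℝ) : ℂ) * ((Real.sqrt (t - s) : ℝ) : ℂ))⁻¹ = (π : ℂ) := by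
  have key : ∀ a : ℝ, 0 < a →
      ∫ x in (0:ℝ)..a, (((Real.sqrt x : ℝ) : ℂ) * ((Real.sqrt (a - x) : ℝ) : ℂ))⁻¹ = (π : ℂ) := by
    intro a ha
    have hb := Complex.betaIntegral_scaled (1/2) (1/2) ha
    rw [show ((1:ℂ)/2 + 1/2 - 1) = 0 by norm_num, Complex.cpow_zero, one_mul, beta_half] at hb
    rw [← hb, intervalIntegral.integral_of_le ha.le, intervalIntegral.integral_of_le ha.le]
    refine setIntegral_congr_fun measurableSet_Ioc fun x hx => ?_
    have h1 : (x:ℂ) ^ ((1:ℂ)/2 - 1) = ((Real.sqrt x : ℝ) : ℂ)⁻¹ := by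
      rw [show ((1:ℂ)/2 - 1) = -(1/2) by norm_num]; exact cpow_neg_half x hx.1.le
    have h2 : ((a:ℂ) - x) ^ ((1:ℂ)/2 - 1) = ((Real.sqrt (a - x) : ℝ) : ℂ)⁻¹ := by
      rw [show ((a:ℂ) - x) = ((a - x : ℝ) : ℂ) by push_cast; ring,
        show ((1:ℂ)/2 - 1) = -(1/2) by norm_num]
      exact cpow_neg_half _ (sub_nonneg.mpr hx.2)
    rw [mul_inv, h1, h2]
  have := intervalIntegral.integral_comp_sub_right
    (fun x => (((Real.sqrt x : ℝ) : ℂ) * ((Real.sqrt (t - u - x) : ℝ) : ℂ))⁻¹) u (a := u) (b := t)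
  simp only [sub_self] at this
  calc ∫ s in u..t, (((Real.sqrt (s - u) : ℝ) : ℂ) * ((Real.sqrt (t - s) : ℝ) : ℂ))⁻¹
      = ∫ s in u..t, (((Real.sqrt (s - u) : ℝ) : ℂ) * ((Real.sqrt (t - u - (s - u)) : ℝ) : ℂ))⁻¹ := by
        congr 1; ext s; congr 3; ring
    _ = ∫ x in (0:ℝ)..(t - u), (((Real.sqrt x : ℝ) : ℂ) * ((Real.sqrt (t - u - x) : ℝ) : ℂ))⁻¹ := this
    _ = (π : ℂ) := key _ (sub_pos.mpr h)

/-- the Abel transform squared is `π` times the integration operator: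
for continuous `f` on `[0,∞)`, `(A(Af))(t) = π ∫_0^t f(s) ds`. -/
theorem abel_squared (f : ℝ → ℂ) (hf : ContinuousOn f (Set.Ici 0)) (t : ℝ) (ht : 0 ≤ t) :
    (∫ s in (0:ℝ)..t,
        (∫ u in (0:ℝ)..s, f u / (Real.sqrt (s - u) : ℂ)) / (Real.sqrt (t - s) : ℂ))
      = (π : ℂ) * ∫ s in (0:ℝ)..t, f s := by
  set A := Set.Ioc (0:ℝ) t with hA
  set K : ℝ → ℝ → ℂ :=
    fun s u => f u / ((Real.sqrt (s - u) : ℝ) : ℂ) / ((Real.sqrt (t - s) : ℝ) : ℂ) with hK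
  obtain ⟨M, hM⟩ : ∃ M, ∀ x ∈ Set.Icc (0:ℝ) t, ‖f x‖ ≤ M :=
    isCompact_Icc.exists_bound_of_continuousOn (hf.mono (fun x hx => hx.1))
  -- measurability
  have hfA : AEStronglyMeasurable f (volume.restrict A) :=
    (hf.mono (Set.Ioc_subset_Icc_self.trans Set.Icc_subset_Ici_self)).aestronglyMeasurable measurableSet_Ioc
  have meas1 : Measurable fun p : ℝ × ℝ => (((Real.sqrt (p.1 - p.2) : ℝ) : ℂ))⁻¹ :=
    (Complex.measurable_ofReal.comp
      (Real.continuous_sqrt.measurable.comp (measurable_fst.sub measurable_snd))).inv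
  have meas2 : Measurable fun p : ℝ × ℝ => (((Real.sqrt (t - p.1) : ℝ) : ℂ))⁻¹ :=
    (Complex.measurable_ofReal.comp
      (Real.continuous_sqrt.measurable.comp (measurable_const.sub measurable_fst))).inv
  have h1f : AEStronglyMeasurable (fun p : ℝ × ℝ => K p.1 p.2)
      ((volume.restrict A).prod (volume.restrict A)) := by
    simp only [hK, div_eq_mul_inv]
    have h0 : AEStronglyMeasurable (fun p : ℝ × ℝ => f p.2) ((volume.restrict A).prod (volume.restrict A)) :=
      hfA.comp_snd
    exact (h0.mul meas1.aestronglyMeasurable).mul meas2.aestronglyMeasurable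
  -- integrability of slices
  have hsqrtInt : ∀ c : ℝ, IntegrableOn (fun x : ℝ => (Real.sqrt (c - x))⁻¹) A := fun c =>
    (intervalIntegrable_iff_integrableOn_Ioc_of_le ht).mp (sqrtInv_intInt c 0 t)
  have hsqrtIntC : ∀ c : ℝ, IntegrableOn (fun x : ℝ => (((Real.sqrt (c - x) : ℝ) : ℂ))⁻¹) A := by
    intro c
    have := (hsqrtInt c).ofReal (𝕜 := ℂ)
    exact this.congr (Filter.Eventually.of_forall fun x => by simp)
  have hbdd : ∀ᵐ u ∂volume.restrict A, ‖f u‖ ≤ M := by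
    filter_upwards [ae_restrict_mem measurableSet_Ioc] with u hu
    exact hM u ⟨hu.1.le, hu.2⟩
  have hKs : ∀ s : ℝ, IntegrableOn (fun u => K s u) A := by
    intro s
    have hg : IntegrableOn
        (fun u : ℝ => (((Real.sqrt (s - u) : ℝ) : ℂ))⁻¹ / ((Real.sqrt (t - s) : ℝ) : ℂ)) A :=
      (hsqrtIntC s).div_const _
    have := Integrable.bdd_mul (hg := hg) (hf := hfA) (hf_bound := hbdd)
    refine this.congr (Filter.Eventually.of_forall fun u => ?_)
    simp only [hK]; ring
  -- the iterated norm bound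
  have hnormint : ∀ s ∈ A, (∫ u in A, ‖K s u‖) ≤ M * (2 * Real.sqrt t) * (Real.sqrt (t - s))⁻¹ := by
    intro s hs
    have hmono : (∫ u in A, ‖K s u‖) ≤ ∫ u in A,
        (M * (Real.sqrt (t - s))⁻¹) * (Real.sqrt (s - u))⁻¹ := by
      refine integral_mono_ae (hKs s).norm
        (((hsqrtInt s).const_mul _)) ?_
      filter_upwards [ae_restrict_mem measurableSet_Ioc] with u hu
      have hfu := hM u ⟨hu.1.le, hu.2⟩
      have h1 : ‖K s u‖ = ‖f u‖ * (Real.sqrt (s - u))⁻¹ * (Real.sqrt (t - s))⁻¹ := by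
        simp [hK, div_div, norm_div, Complex.norm_real,
          abs_of_nonneg (Real.sqrt_nonneg _), div_eq_mul_inv, mul_inv, mul_assoc]
      rw [h1]
      have h2 : (0:ℝ) ≤ (Real.sqrt (s - u))⁻¹ := inv_nonneg.mpr (Real.sqrt_nonneg _)
      have h3 : (0:ℝ) ≤ (Real.sqrt (t - s))⁻¹ := inv_nonneg.mpr (Real.sqrt_nonneg _)
      calc ‖f u‖ * (Real.sqrt (s - u))⁻¹ * (Real.sqrt (t - s))⁻¹
          ≤ M * (Real.sqrt (s - u))⁻¹ * (Real.sqrt (t - s))⁻¹ := by gcongr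
        _ = (M * (Real.sqrt (t - s))⁻¹) * (Real.sqrt (s - u))⁻¹ := by ring
    have hval : ∫ u in A, (Real.sqrt (s - u))⁻¹ = 2 * Real.sqrt s := by
      rw [setIntegral_eq_of_subset_of_forall_diff_eq_zero measurableSet_Ioc
        (Set.Ioc_subset_Ioc_right hs.2) ?_]
      · rw [← intervalIntegral.integral_of_le hs.1.le]
        exact sqrt_integral s hs.1.le
      · intro u hu
        have : s < u := by
          rcases hu with ⟨hu1, hu2⟩
          by_contra h
          exact hu2 ⟨hu1.1, not_lt.mp h⟩
        rw [Real.sqrt_eq_zero_of_nonpos (by linarith), inv_zero]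
    rw [MeasureTheory.integral_const_mul, hval] at hmono
    refine hmono.trans ?_
    have h2 : Real.sqrt s ≤ Real.sqrt t := Real.sqrt_le_sqrt hs.2
    have h3 : (0:ℝ) ≤ (Real.sqrt (t - s))⁻¹ := inv_nonneg.mpr (Real.sqrt_nonneg _)
    have hM0 : 0 ≤ M := le_trans (norm_nonneg _) (hM 0 ⟨le_refl _, ht⟩)
    calc M * (Real.sqrt (t - s))⁻¹ * (2 * Real.sqrt s)
        ≤ M * (Real.sqrt (t - s))⁻¹ * (2 * Real.sqrt t) := by gcongr
      _ = M * (2 * Real.sqrt t) * (Real.sqrt (t - s))⁻¹ := by ring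
  -- product integrability
  have hInt : Integrable (fun p : ℝ × ℝ => K p.1 p.2)
      ((volume.restrict A).prod (volume.restrict A)) := by
    refine (integrable_prod_iff h1f).mpr ⟨?_, ?_⟩
    · exact Filter.Eventually.of_forall fun s => hKs s
    · refine Integrable.mono' ((((hsqrtInt t).const_mul (M * (2 * Real.sqrt t)))))
        h1f.norm.integral_prod_right' ?_
      filter_upwards [ae_restrict_mem measurableSet_Ioc] with s hs
      rw [Real.norm_of_nonneg (integral_nonneg fun u => norm_nonneg _)]
      exact hnormint s hs
  -- main computation
  calc (∫ s in (0:ℝ)..t,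
        (∫ u in (0:ℝ)..s, f u / (Real.sqrt (s - u) : ℂ)) / (Real.sqrt (t - s) : ℂ))
      = ∫ s in A, ∫ u in A, K s u := by
        rw [intervalIntegral.integral_of_le ht]
        refine setIntegral_congr_fun measurableSet_Ioc fun s hs => ?_
        rw [← intervalIntegral.integral_div, intervalIntegral.integral_of_le hs.1.le]
        refine (setIntegral_eq_of_subset_of_forall_diff_eq_zero measurableSet_Ioc
          (Set.Ioc_subset_Ioc_right hs.2) ?_).symm
        intro u hu
        have : s < u := by
          rcases hu with ⟨hu1, hu2⟩
          by_contra h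
          exact hu2 ⟨hu1.1, not_lt.mp h⟩
        have h0 : Real.sqrt (s - u) = 0 := Real.sqrt_eq_zero_of_nonpos (by linarith)
        simp [hK, h0]
    _ = ∫ u in A, ∫ s in A, K s u := integral_integral_swap hInt
    _ = ∫ u in A, (π : ℂ) * f u := by
        rw [hA, integral_Ioc_eq_integral_Ioo, integral_Ioc_eq_integral_Ioo]
        refine setIntegral_congr_fun measurableSet_Ioo fun u hu => ?_
        have heq : ∀ s : ℝ, K s u
            = f u * ((((Real.sqrt (s - u) : ℝ) : ℂ)) * (((Real.sqrt (t - s) : ℝ) : ℂ)))⁻¹ := by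
          intro s; simp only [hK]; rw [div_div, div_eq_mul_inv]
        simp_rw [heq]
        rw [MeasureTheory.integral_const_mul]
        rw [setIntegral_eq_of_subset_of_forall_diff_eq_zero measurableSet_Ioc
          (Set.Ioc_subset_Ioc_left hu.1.le) ?_]
        · rw [← intervalIntegral.integral_of_le hu.2.le, kernel_integral hu.2, mul_comm]
        · intro s hsd
          have : s ≤ u := by
            rcases hsd with ⟨hs1, hs2⟩
            by_contra h
            exact hs2 ⟨not_le.mp h, hs1.2⟩
          have h0 : Real.sqrt (s - u) = 0 := Real.sqrt_eq_zero_of_nonpos (by linarith)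
          simp [h0]
    _ = (π : ℂ) * ∫ s in (0:ℝ)..t, f s := by
        rw [MeasureTheory.integral_const_mul, intervalIntegral.integral_of_le ht]
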